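/- The adjoint interior shock condition [−n_yF_x(W) + n_xF_y(W)]·∂_tψ = 0 across a 2-D Euler shock simplifies, using the RH relations, to v_t[ρ](∂_tψ₁ + H∂_tψ₄) + ([p] + v_t²[ρ])(−n_y∂_tψ₂ + n_x∂_tψ₃) = 0. -/
import Mathlib


open Matrix

/- The adjoint interior shock condition [−n_y F_x(W) + n_x F_y(W)] · ∂_tψ = 0 across a
2-D Euler shock simplifies, using the Rankine–Hugoniot relations ([ρvₙ] = 0, [v_t] = 0,
[H] = 0, [p + ρvₙ²] = 0), to
v_t [ρ](∂_tψ₁ + H ∂_tψ₄) + ([p] + v_t²[ρ])(−n_y ∂_tψ₂ + n_x ∂_tψ₃) = 0: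
the jump of the tangential flux dotted with ∂_tψ equals that expression.  The velocity
on each side is (u, v) = vₙ n + v_t t with n = (n_x, n_y), t = (−n_y, n_x). -/
theorem adjoint_interior_shock_condition_simplification
    (nx ny vt H vnp vnm ρp ρm pp pm : ℝ) (Dt : Fin 4 → ℝ)
    (hn : nx^2 + ny^2 = 1)
    (hmass : ρp * vnp = ρm * vnm)
    (hmom : pp + ρp * vnp^2 = pm + ρm * vnm^2) :
    ((-ny) • (![ρp * (vnp*nx - vt*ny),
                ρp * (vnp*nx - vt*ny)^2 + pp,
                ρp * (vnp*nx - vt*ny) * (vnp*ny + vt*nx),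
                ρp * (vnp*nx - vt*ny) * H] : Fin 4 → ℝ)
      + nx • (![ρp * (vnp*ny + vt*nx),
                ρp * (vnp*nx - vt*ny) * (vnp*ny + vt*nx),
                ρp * (vnp*ny + vt*nx)^2 + pp,
                ρp * (vnp*ny + vt*nx) * H] : Fin 4 → ℝ)
      - ((-ny) • (![ρm * (vnm*nx - vt*ny),
                ρm * (vnm*nx - vt*ny)^2 + pm,
                ρm * (vnm*nx - vt*ny) * (vnm*ny + vt*nx),
                ρm * (vnm*nx - vt*ny) * H] : Fin 4 → ℝ)
        + nx • (![ρm * (vnm*ny + vt*nx),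
                ρm * (vnm*nx - vt*ny) * (vnm*ny + vt*nx),
                ρm * (vnm*ny + vt*nx)^2 + pm,
                ρm * (vnm*ny + vt*nx) * H] : Fin 4 → ℝ))) ⬝ᵥ Dt
    = vt * (ρp - ρm) * (Dt 0 + H * Dt 3)
      + ((pp - pm) + vt^2 * (ρp - ρm)) * (-ny * Dt 1 + nx * Dt 2) := by
  simp only [dotProduct, Fin.sum_univ_four, Pi.add_apply, Pi.sub_apply,
    Pi.smul_apply, smul_eq_mul, Matrix.cons_val_zero, Matrix.cons_val_one,
    Matrix.head_cons, Matrix.cons_val_two, Matrix.tail_cons, Matrix.cons_val_three]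
  linear_combination (vt*(ρp-ρm)*(Dt 0 - vt*ny*Dt 1 + vt*nx*Dt 2 + H*Dt 3)) * hn
    + (vt*(nx^2+ny^2)*(nx*Dt 1 + ny*Dt 2)) * hmass
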